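/- Let ξ > 0 and a < b. Define f(t) = (1/ξ²)·(1 - sinh(ξ(t-a))/sinh(ξ(b-a)) + sinh(ξ(t-b))/sinh(ξ(b-a))). Then f(a) = f(b) = 0, f''(t) - ξ² f(t) = -1 on [a,b], and 0 ≤ f(t) ≤ (1/2)(t-a)(b-t) ≤ (1/8)(b-a)² for all t ∈ [a,b]. -/

import Mathlib

open Real Set

lemma aux_sinh_le (x : ℝ) (hx : 0 ≤ x) : Real.sinh x ≤ x * Real.cosh x := by
  have h : ∀ y ∈ Set.Ici (0:ℝ), HasDerivAt (fun z => z * Real.cosh z - Real.sinh z)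
      (y * Real.sinh y) y := by
    intro y _
    have := ((hasDerivAt_id y).mul (Real.hasDerivAt_cosh y)).sub (Real.hasDerivAt_sinh y)
    refine this.congr_deriv ?_
    simp only [id_eq]; ring
  have mono : MonotoneOn (fun z => z * Real.cosh z - Real.sinh z) (Set.Ici 0) := by
    apply monotoneOn_of_deriv_nonneg (convex_Ici 0)
    · exact Continuous.continuousOn (by continuity)
    · intro y hy
      rw [interior_Ici] at hy
      exact (h y (Set.mem_Ici.mpr (le_of_lt hy))).differentiableAt.differentiableWithinAt
    · intro y hy
      rw [interior_Ici] at hy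
      rw [(h y (Set.mem_Ici.mpr hy.le)).deriv]
      exact mul_nonneg hy.le (by simpa using Real.sinh_le_sinh.mpr hy.le)
  have := mono (Set.self_mem_Ici) hx hx
  simpa using this

lemma aux_cosh_le (x : ℝ) (hx : 0 ≤ x) : Real.cosh x - 1 ≤ (x / 2) * Real.sinh x := by
  have h : ∀ y, HasDerivAt (fun z => (z / 2) * Real.sinh z - (Real.cosh z - 1))
      ((1/2) * Real.sinh y + (y/2) * Real.cosh y - Real.sinh y) y := by
    intro y
    have := (((hasDerivAt_id y).div_const 2).mul (Real.hasDerivAt_sinh y)).sub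
      ((Real.hasDerivAt_cosh y).sub_const 1)
    refine this.congr_deriv ?_
    rfl
  have mono : MonotoneOn (fun z => (z / 2) * Real.sinh z - (Real.cosh z - 1)) (Set.Ici 0) := by
    apply monotoneOn_of_deriv_nonneg (convex_Ici 0)
    · exact Continuous.continuousOn (by continuity)
    · intro y hy; exact (h y).differentiableAt.differentiableWithinAt
    · intro y hy
      rw [interior_Ici] at hy
      rw [(h y).deriv]
      have := aux_sinh_le y hy.le
      nlinarith
  have := mono (Set.self_mem_Ici) hx hx
  simpa using this

lemma aux_key (u v : ℝ) (hu : 0 ≤ u) (hv : 0 ≤ v) :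
    Real.sinh (u + v) - Real.sinh u - Real.sinh v ≤ (u * v / 2) * Real.sinh (u + v) := by
  have h1 := aux_sinh_le u hu
  have h2 := aux_cosh_le v hv
  have h3 := aux_sinh_le v hv
  have h4 := aux_cosh_le u hu
  have su : 0 ≤ Real.sinh u := by simpa using Real.sinh_le_sinh.mpr hu
  have sv : 0 ≤ Real.sinh v := by simpa using Real.sinh_le_sinh.mpr hv
  have A : Real.sinh u * (Real.cosh v - 1) ≤ (u * v / 2) * (Real.cosh u * Real.sinh v) := by
    calc Real.sinh u * (Real.cosh v - 1) ≤ Real.sinh u * ((v / 2) * Real.sinh v) :=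
          mul_le_mul_of_nonneg_left h2 su
      _ ≤ (u * Real.cosh u) * ((v / 2) * Real.sinh v) :=
          mul_le_mul_of_nonneg_right h1 (by positivity)
      _ = (u * v / 2) * (Real.cosh u * Real.sinh v) := by ring
  have B : Real.sinh v * (Real.cosh u - 1) ≤ (u * v / 2) * (Real.cosh v * Real.sinh u) := by
    calc Real.sinh v * (Real.cosh u - 1) ≤ Real.sinh v * ((u / 2) * Real.sinh u) :=
          mul_le_mul_of_nonneg_left h4 sv
      _ ≤ (v * Real.cosh v) * ((u / 2) * Real.sinh u) :=
          mul_le_mul_of_nonneg_right h3 (by positivity)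
      _ = (u * v / 2) * (Real.cosh v * Real.sinh u) := by ring
  rw [Real.sinh_add]
  nlinarith [A, B]

lemma aux_super (u v : ℝ) (hu : 0 ≤ u) (hv : 0 ≤ v) :
    Real.sinh u + Real.sinh v ≤ Real.sinh (u + v) := by
  have su : 0 ≤ Real.sinh u := by simpa using Real.sinh_le_sinh.mpr hu
  have sv : 0 ≤ Real.sinh v := by simpa using Real.sinh_le_sinh.mpr hv
  have cu : 1 ≤ Real.cosh u := Real.one_le_cosh u
  have cv : 1 ≤ Real.cosh v := Real.one_le_cosh v
  rw [Real.sinh_add]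
  nlinarith

theorem stmt_5 (ξ a b : ℝ) (hξ : 0 < ξ) (hab : a < b) :
    let f : ℝ → ℝ := fun t => (1 / ξ ^ 2) *
      (1 - Real.sinh (ξ * (t - a)) / Real.sinh (ξ * (b - a))
         + Real.sinh (ξ * (t - b)) / Real.sinh (ξ * (b - a)))
    f a = 0 ∧ f b = 0 ∧
    (∀ t ∈ Set.Icc a b, deriv (deriv f) t - ξ ^ 2 * f t = -1) ∧
    (∀ t ∈ Set.Icc a b,
      0 ≤ f t ∧ f t ≤ (1 / 2) * (t - a) * (b - t) ∧
      (1 / 2) * (t - a) * (b - t) ≤ (1 / 8) * (b - a) ^ 2) := by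
  intro f
  have hS : 0 < Real.sinh (ξ * (b - a)) := Real.sinh_pos_iff.mpr (by nlinarith)
  set S := Real.sinh (ξ * (b - a)) with hSdef
  have hξ2 : (0:ℝ) < ξ ^ 2 := by positivity
  have harg : ∀ c t : ℝ, HasDerivAt (fun t => ξ * (t - c)) ξ t := by
    intro c t
    simpa using ((hasDerivAt_id t).sub_const c).const_mul ξ
  have hd1 : ∀ t, HasDerivAt f
      ((1 / ξ ^ 2) * (-(ξ * Real.cosh (ξ * (t - a)) / S) + ξ * Real.cosh (ξ * (t - b)) / S)) t := by
    intro t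
    have hs1 : HasDerivAt (fun t => Real.sinh (ξ * (t - a))) (Real.cosh (ξ * (t - a)) * ξ) t :=
      (Real.hasDerivAt_sinh _).comp t (harg a t)
    have hs2 : HasDerivAt (fun t => Real.sinh (ξ * (t - b))) (Real.cosh (ξ * (t - b)) * ξ) t :=
      (Real.hasDerivAt_sinh _).comp t (harg b t)
    have := (((hasDerivAt_const t (1:ℝ)).sub (hs1.div_const S)).add
      (hs2.div_const S)).const_mul (1 / ξ ^ 2)
    refine this.congr_deriv ?_
    ring
  have hdf : deriv f = fun t =>
      (1 / ξ ^ 2) * (-(ξ * Real.cosh (ξ * (t - a)) / S) + ξ * Real.cosh (ξ * (t - b)) / S) :=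
    funext fun t => (hd1 t).deriv
  have hd2 : ∀ t, HasDerivAt (deriv f)
      ((1 / ξ ^ 2) * (-(ξ * (Real.sinh (ξ * (t - a)) * ξ) / S)
        + ξ * (Real.sinh (ξ * (t - b)) * ξ) / S)) t := by
    intro t
    rw [hdf]
    have hc1 : HasDerivAt (fun t => Real.cosh (ξ * (t - a))) (Real.sinh (ξ * (t - a)) * ξ) t :=
      (Real.hasDerivAt_cosh _).comp t (harg a t)
    have hc2 : HasDerivAt (fun t => Real.cosh (ξ * (t - b))) (Real.sinh (ξ * (t - b)) * ξ) t :=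
      (Real.hasDerivAt_cosh _).comp t (harg b t)
    have := (((((hc1.const_mul ξ).div_const S).neg).add
      ((hc2.const_mul ξ).div_const S))).const_mul (1 / ξ ^ 2)
    refine this.congr_deriv ?_
    rfl
  refine ⟨?_, ?_, ?_, ?_⟩
  · show (1 / ξ ^ 2) * (1 - Real.sinh (ξ * (a - a)) / S + Real.sinh (ξ * (a - b)) / S) = 0
    rw [show ξ * (a - a) = 0 by ring, show ξ * (a - b) = -(ξ * (b - a)) by ring,
      Real.sinh_zero, Real.sinh_neg]
    field_simp
    linarith
  · show (1 / ξ ^ 2) * (1 - Real.sinh (ξ * (b - a)) / S + Real.sinh (ξ * (b - b)) / S) = 0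
    rw [show ξ * (b - b) = 0 by ring, Real.sinh_zero]
    field_simp
    linarith
  · intro t _
    rw [(hd2 t).deriv]
    show (1 / ξ ^ 2) * (-(ξ * (Real.sinh (ξ * (t - a)) * ξ) / S)
        + ξ * (Real.sinh (ξ * (t - b)) * ξ) / S)
      - ξ ^ 2 * ((1 / ξ ^ 2) * (1 - Real.sinh (ξ * (t - a)) / S + Real.sinh (ξ * (t - b)) / S))
      = -1
    field_simp
    ring
  · intro t ht
    obtain ⟨hta, htb⟩ := ht
    have hu : 0 ≤ ξ * (t - a) := by nlinarith
    have hv : 0 ≤ ξ * (b - t) := by nlinarith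
    have hsum : ξ * (t - a) + ξ * (b - t) = ξ * (b - a) := by ring
    have hneg : ξ * (t - b) = -(ξ * (b - t)) := by ring
    have hft : f t = (1 / ξ ^ 2) *
        ((S - Real.sinh (ξ * (t - a)) - Real.sinh (ξ * (b - t))) / S) := by
      show (1 / ξ ^ 2) * (1 - Real.sinh (ξ * (t - a)) / S + Real.sinh (ξ * (t - b)) / S) = _
      rw [hneg, Real.sinh_neg]
      field_simp
      ring
    have hsuper : Real.sinh (ξ * (t - a)) + Real.sinh (ξ * (b - t)) ≤ S := by
      rw [hSdef, ← hsum]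
      exact aux_super _ _ hu hv
    have hkey : S - Real.sinh (ξ * (t - a)) - Real.sinh (ξ * (b - t))
        ≤ ((ξ * (t - a)) * (ξ * (b - t)) / 2) * S := by
      rw [hSdef, ← hsum]
      exact aux_key _ _ hu hv
    refine ⟨?_, ?_, ?_⟩
    · rw [hft]
      apply mul_nonneg (by positivity)
      apply div_nonneg _ hS.le
      linarith
    · rw [hft]
      have h1 : (S - Real.sinh (ξ * (t - a)) - Real.sinh (ξ * (b - t))) / S
          ≤ (ξ * (t - a)) * (ξ * (b - t)) / 2 := by
        rw [div_le_iff₀ hS]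
        linarith [hkey]
      calc (1 / ξ ^ 2) * ((S - Real.sinh (ξ * (t - a)) - Real.sinh (ξ * (b - t))) / S)
          ≤ (1 / ξ ^ 2) * ((ξ * (t - a)) * (ξ * (b - t)) / 2) :=
            mul_le_mul_of_nonneg_left h1 (by positivity)
        _ = (1 / 2) * (t - a) * (b - t) := by field_simp
    · nlinarith [sq_nonneg (a + b - 2 * t)]
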